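/- arXiv:2508.06264 — 5 statements merged into one kernel-verified Lean document; each statement's English description precedes it below -/
import Mathlib

section
/- Consider arithmetic expressions over nonnegative rational constants with binary addition and binary multiplication, where each expression φ is assigned a set of variables V(φ) with the property that multiplications are decomposable (disjoint variable sets) and each addition has the form (x·φ₁) + (x̄·φ₂) with x ∉ V(φ₁) ∪ V(φ₂). If |V(φ)| = n ≤ 1/(2√ε) and each leaf constant is approximated with relative error at most ε, and each operation introduces relative error consistent with floating-point rounding (multiplication adds 2 units of ε after propagating the sum of argument errors; addition adds 1 unit after propagating the maximum), then the evaluated approximation Ŵ(φ) satisfies δ[Ŵ(φ), W(φ)] ≤ (4n - 2)·ε. -/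
/-- Relative approximation error. -/
noncomputable def relErr (xh x : ℝ) : ℝ :=
  if x = 0 then (if xh = 0 then 0 else 1) else |xh - x| / |x|

/-- Decision-DNNF formulas: literals, (decomposable) conjunctions, and decision
disjunctions `(x ∧ φ₁) ∨ (x̄ ∧ φ₂)`. -/
inductive DFormula : Type where
  | lit : ℕ → Bool → DFormula
  | conj : DFormula → DFormula → DFormula
  | dec : ℕ → DFormula → DFormula → DFormula

namespace DFormula

/-- The set of variables of a formula. -/
def vars : DFormula → Finset ℕ
  | lit x _ => {x}
  | conj f g => vars f ∪ vars g
  | dec x f g => insert x (vars f ∪ vars g)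

/-- Decomposability: conjunctions have disjoint variable sets, and a decision
variable does not occur in either branch. -/
def Decomposable : DFormula → Prop
  | lit _ _ => True
  | conj f g => Disjoint (vars f) (vars g) ∧ Decomposable f ∧ Decomposable g
  | dec x f g => x ∉ vars f ∪ vars g ∧ Decomposable f ∧ Decomposable g

/-- Exact arithmetic evaluation with literal weights `w`. -/
def eval (w : ℕ → Bool → ℝ) : DFormula → ℝ
  | lit x b => w x b
  | conj f g => eval w f * eval w g
  | dec x f g => w x true * eval w f + w x false * eval w g

end DFormula

set_option maxHeartbeats 1000000

namespace DFormula

lemma one_le_card_vars (φ : DFormula) : 1 ≤ φ.vars.card := by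
  induction φ with
  | lit x b => simp [vars]
  | conj f g hf hg =>
      calc 1 ≤ f.vars.card := hf
        _ ≤ (conj f g).vars.card := Finset.card_le_card Finset.subset_union_left
  | dec x f g hf hg =>
      exact Finset.card_pos.mpr ⟨x, Finset.mem_insert_self _ _⟩

lemma eval_nonneg (w : ℕ → Bool → ℝ) (hw : ∀ x b, 0 ≤ w x b) (φ : DFormula) :
    0 ≤ φ.eval w := by
  induction φ with
  | lit x b => exact hw x b
  | conj f g hf hg => exact mul_nonneg hf hg
  | dec x f g hf hg =>
      exact add_nonneg (mul_nonneg (hw x true) hf) (mul_nonneg (hw x false) hg)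

end DFormula

lemma prod_step (a b ah bh s t : ℝ) (ha : 0 ≤ a) (hb : 0 ≤ b) (hs : 0 ≤ s) (ht : 0 ≤ t)
    (hah : |ah - a| ≤ s * a) (hbh : |bh - b| ≤ t * b) :
    |ah * bh - a * b| ≤ (s + t + s * t) * (a * b) := by
  rw [abs_le] at hah hbh ⊢
  obtain ⟨h1, h2⟩ := hah
  obtain ⟨h3, h4⟩ := hbh
  have p1 : 0 ≤ (a + s*a - ah) * (b + t*b - bh) := mul_nonneg (by linarith) (by linarith)
  have p2 : 0 ≤ (ah - (a - s*a)) * (bh - (b - t*b)) := mul_nonneg (by linarith) (by linarith)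
  have p3 : 0 ≤ (a + s*a - ah) * (bh - (b - t*b)) := mul_nonneg (by linarith) (by linarith)
  have p4 : 0 ≤ (ah - (a - s*a)) * (b + t*b - bh) := mul_nonneg (by linarith) (by linarith)
  have q1 : 0 ≤ s * a * b := by positivity
  have q2 : 0 ≤ t * a * b := by positivity
  have q3 : 0 ≤ s * t * (a * b) := by positivity
  constructor <;> nlinarith [mul_nonneg ha hb]

lemma round_step (v p x D ε : ℝ) (hε : 0 ≤ ε) (hx : 0 ≤ x)
    (h1 : |p - x| ≤ D * x) (h2 : |v - p| ≤ ε * |p|) :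
    |v - x| ≤ (ε * (1 + D) + D) * x := by
  have hp : |p| ≤ (1 + D) * x := by
    have := abs_sub_le p x 0
    simp only [sub_zero] at this
    rw [abs_of_nonneg hx] at this
    nlinarith
  calc |v - x| ≤ |v - p| + |p - x| := abs_sub_le v p x
    _ ≤ ε * ((1+D)*x) + D * x := by
        refine add_le_add (le_trans h2 ?_) h1
        exact mul_le_mul_of_nonneg_left hp hε
    _ = (ε * (1 + D) + D) * x := by ring

lemma relErr_of (yh y δ : ℝ) (hy : 0 ≤ y) (hδ : 0 ≤ δ) (h : |yh - y| ≤ δ * y) :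
    relErr yh y ≤ δ := by
  unfold relErr
  split_ifs with h0 h1
  · exact hδ
  · exfalso
    subst h0
    simp only [mul_zero, sub_zero] at h
    exact h1 (abs_nonpos_iff.mp h)
  · rw [div_le_iff₀ (abs_pos.mpr h0), abs_of_nonneg hy]
    exact h

lemma relErr_to (yh y δ : ℝ) (hy : 0 ≤ y) (hδ : δ < 1) (h : relErr yh y ≤ δ) :
    |yh - y| ≤ δ * y := by
  unfold relErr at h
  split_ifs at h with h0 h1
  · subst h0; subst h1; simp
  · linarith
  · rw [div_le_iff₀ (abs_pos.mpr h0), abs_of_nonneg hy] at h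
    linarith [h]

lemma aux_bound (w wh : ℕ → Bool → ℝ) (Wh : DFormula → ℝ) (ε : ℝ) (hε : 0 < ε)
    (hwpos : ∀ x b, 0 ≤ w x b)
    (hlit' : ∀ x b, |wh x b - w x b| ≤ ε * w x b)
    (hWlit : ∀ x b, Wh (.lit x b) = wh x b)
    (hconj : ∀ f g, |Wh (.conj f g) - Wh f * Wh g| ≤ ε * |Wh f * Wh g|)
    (hdec : ∀ x f g, ∃ v₁ v₂ : ℝ,
      |v₁ - wh x true * Wh f| ≤ ε * |wh x true * Wh f| ∧
      |v₂ - wh x false * Wh g| ≤ ε * |wh x false * Wh g| ∧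
      |Wh (.dec x f g) - (v₁ + v₂)| ≤ ε * |v₁ + v₂|)
    (φ : DFormula) :
    DFormula.Decomposable φ → 4 * ((φ.vars.card : ℝ))^2 * ε ≤ 1 →
    |Wh φ - φ.eval w| ≤ (4 * (φ.vars.card : ℝ) - 2) * ε * φ.eval w := by
  induction φ with
  | lit x b =>
      intro _ _
      simp only [DFormula.vars, DFormula.eval, Finset.card_singleton, Nat.cast_one,
        hWlit x b]
      have := hlit' x b
      have hw := hwpos x b
      nlinarith [this, mul_nonneg hε.le hw]
  | conj f g ihf ihg =>
      rintro ⟨hdisj, hdf, hdg⟩ hcard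
      have hcards : (DFormula.conj f g).vars.card = f.vars.card + g.vars.card := by
        simp only [DFormula.vars]
        exact Finset.card_union_of_disjoint hdisj
      set n1 : ℝ := (f.vars.card : ℝ) with hn1
      set n2 : ℝ := (g.vars.card : ℝ) with hn2
      have hn1p : 1 ≤ n1 := by rw [hn1]; exact_mod_cast f.one_le_card_vars
      have hn2p : 1 ≤ n2 := by rw [hn2]; exact_mod_cast g.one_le_card_vars
      have hcast : ((DFormula.conj f g).vars.card : ℝ) = n1 + n2 := by
        rw [hcards]; push_cast; ring
      rw [hcast] at hcard ⊢
      have hf4 : 4 * n1^2 * ε ≤ 1 := by nlinarith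
      have hg4 : 4 * n2^2 * ε ≤ 1 := by nlinarith
      have ihf' := ihf hdf hf4
      have ihg' := ihg hdg hg4
      set a := f.eval w
      set b := g.eval w
      have ha : 0 ≤ a := DFormula.eval_nonneg w hwpos f
      have hb : 0 ≤ b := DFormula.eval_nonneg w hwpos g
      set s : ℝ := (4 * n1 - 2) * ε with hs
      set t : ℝ := (4 * n2 - 2) * ε with ht
      have hsp : 0 ≤ s := by nlinarith
      have htp : 0 ≤ t := by nlinarith
      have hprod : |Wh f * Wh g - a * b| ≤ (s + t + s*t) * (a * b) :=
        prod_step a b (Wh f) (Wh g) s t ha hb hsp htp ihf' ihg'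
      have hround : |Wh (DFormula.conj f g) - a * b|
          ≤ (ε * (1 + (s + t + s*t)) + (s + t + s*t)) * (a * b) :=
        round_step _ _ _ _ _ hε.le (mul_nonneg ha hb) hprod (hconj f g)
      have hab : (0:ℝ) ≤ a * b := mul_nonneg ha hb
      have key : ε * (1 + (s + t + s*t)) + (s + t + s*t) ≤ (4 * (n1 + n2) - 2) * ε := by
        rw [hs, ht]
        nlinarith [mul_pos hε hε, sq_nonneg (n1 - n2),
          mul_nonneg (mul_nonneg hε.le hε.le) hε.le,
          mul_le_of_le_one_left hε.le (by nlinarith : ε * (4*(n1+n2)^2) ≤ 1)]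
      have hev : (DFormula.conj f g).eval w = a * b := rfl
      rw [hev]
      calc |Wh (DFormula.conj f g) - a * b|
          ≤ (ε * (1 + (s + t + s*t)) + (s + t + s*t)) * (a * b) := hround
        _ ≤ ((4 * (n1 + n2) - 2) * ε) * (a * b) := mul_le_mul_of_nonneg_right key hab
  | dec x f g ihf ihg =>
      rintro ⟨hx, hdf, hdg⟩ hcard
      have hcards : (DFormula.dec x f g).vars.card = 1 + (f.vars ∪ g.vars).card := by
        simp only [DFormula.vars]
        rw [Finset.card_insert_of_notMem hx]
        ring
      set u : ℝ := ((f.vars ∪ g.vars).card : ℝ) with hu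
      have hcast : ((DFormula.dec x f g).vars.card : ℝ) = 1 + u := by
        rw [hcards]; push_cast; ring
      rw [hcast] at hcard ⊢
      have hm1 : (f.vars.card : ℝ) ≤ u := by
        rw [hu]
        exact_mod_cast Finset.card_le_card (Finset.subset_union_left : f.vars ⊆ f.vars ∪ g.vars)
      have hm2 : (g.vars.card : ℝ) ≤ u := by
        rw [hu]
        exact_mod_cast Finset.card_le_card (Finset.subset_union_right : g.vars ⊆ f.vars ∪ g.vars)
      have hup : 1 ≤ u := le_trans (by exact_mod_cast f.one_le_card_vars) hm1
      have hf4 : 4 * ((f.vars.card : ℝ))^2 * ε ≤ 1 := by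
        have h1 : (f.vars.card : ℝ) ≤ 1 + u := by linarith
        have h0 : (0:ℝ) ≤ (f.vars.card : ℝ) := Nat.cast_nonneg _
        have hcc : ((f.vars.card : ℝ))^2 ≤ (1 + u)^2 := by nlinarith
        nlinarith [mul_le_mul_of_nonneg_right hcc hε.le]
      have hg4 : 4 * ((g.vars.card : ℝ))^2 * ε ≤ 1 := by
        have h1 : (g.vars.card : ℝ) ≤ 1 + u := by linarith
        have h0 : (0:ℝ) ≤ (g.vars.card : ℝ) := Nat.cast_nonneg _
        have hcc : ((g.vars.card : ℝ))^2 ≤ (1 + u)^2 := by nlinarith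
        nlinarith [mul_le_mul_of_nonneg_right hcc hε.le]
      have ihf' := ihf hdf hf4
      have ihg' := ihg hdg hg4
      obtain ⟨v₁, v₂, hv₁, hv₂, hr⟩ := hdec x f g
      set a := w x true * f.eval w with hadef
      set b := w x false * g.eval w with hbdef
      have hfev : 0 ≤ f.eval w := DFormula.eval_nonneg w hwpos f
      have hgev : 0 ≤ g.eval w := DFormula.eval_nonneg w hwpos g
      have ha : 0 ≤ a := mul_nonneg (hwpos x true) hfev
      have hb : 0 ≤ b := mul_nonneg (hwpos x false) hgev
      set S : ℝ := (4 * u - 2) * ε with hS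
      have hSp : 0 ≤ S := by nlinarith
      set E : ℝ := ε + S + ε * S with hE
      set K : ℝ := ε * (1 + E) + E with hK
      -- bound for branch f
      have hs1p : (0:ℝ) ≤ (4 * (f.vars.card : ℝ) - 2) * ε := by
        have : (1:ℝ) ≤ (f.vars.card : ℝ) := by exact_mod_cast f.one_le_card_vars
        nlinarith
      have hs2p : (0:ℝ) ≤ (4 * (g.vars.card : ℝ) - 2) * ε := by
        have : (1:ℝ) ≤ (g.vars.card : ℝ) := by exact_mod_cast g.one_le_card_vars
        nlinarith
      have hb1 : |wh x true * Wh f - a|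
          ≤ (ε + (4 * (f.vars.card : ℝ) - 2) * ε + ε * ((4 * (f.vars.card : ℝ) - 2) * ε)) * a := by
        rw [hadef]
        exact prod_step _ _ _ _ _ _ (hwpos x true) hfev hε.le hs1p (hlit' x true) ihf'
      have hb2 : |wh x false * Wh g - b|
          ≤ (ε + (4 * (g.vars.card : ℝ) - 2) * ε + ε * ((4 * (g.vars.card : ℝ) - 2) * ε)) * b := by
        rw [hbdef]
        exact prod_step _ _ _ _ _ _ (hwpos x false) hgev hε.le hs2p (hlit' x false) ihg'
      -- weaken to E
      have hmono : ∀ m : ℝ, m ≤ u →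
          ε + (4 * m - 2) * ε + ε * ((4 * m - 2) * ε) ≤ E := by
        intro m hm
        rw [hE, hS]
        have h₁ : m * ε ≤ u * ε := mul_le_mul_of_nonneg_right hm hε.le
        have h₂ : ε * (m * ε) ≤ ε * (u * ε) := mul_le_mul_of_nonneg_left h₁ hε.le
        nlinarith
      have hEb1 : |wh x true * Wh f - a| ≤ E * a :=
        le_trans hb1 (mul_le_mul_of_nonneg_right (hmono _ hm1) ha)
      have hEb2 : |wh x false * Wh g - b| ≤ E * b :=
        le_trans hb2 (mul_le_mul_of_nonneg_right (hmono _ hm2) hb)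
      have hKb1 : |v₁ - a| ≤ K * a := round_step _ _ _ _ _ hε.le ha hEb1 hv₁
      have hKb2 : |v₂ - b| ≤ K * b := round_step _ _ _ _ _ hε.le hb hEb2 hv₂
      have hsum : |v₁ + v₂ - (a + b)| ≤ K * (a + b) := by
        calc |v₁ + v₂ - (a + b)| = |(v₁ - a) + (v₂ - b)| := by ring_nf
          _ ≤ |v₁ - a| + |v₂ - b| := abs_add_le _ _
          _ ≤ K * a + K * b := add_le_add hKb1 hKb2
          _ = K * (a + b) := by ring
      have hfinal : |Wh (DFormula.dec x f g) - (a + b)| ≤ (ε * (1 + K) + K) * (a + b) :=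
        round_step _ _ _ _ _ hε.le (add_nonneg ha hb) hsum hr
      have key : ε * (1 + K) + K ≤ (4 * (1 + u) - 2) * ε := by
        rw [hK, hE, hS]
        nlinarith [mul_pos hε hε, mul_pos (mul_pos hε hε) hε, sq_nonneg ε, sq_nonneg (u*ε),
          mul_nonneg (mul_nonneg hε.le hε.le) (mul_nonneg hε.le hε.le)]
      have hev : (DFormula.dec x f g).eval w = a + b := rfl
      rw [hev]
      calc |Wh (DFormula.dec x f g) - (a + b)|
          ≤ (ε * (1 + K) + K) * (a + b) := hfinal
        _ ≤ ((4 * (1 + u) - 2) * ε) * (a + b) :=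
            mul_le_mul_of_nonneg_right key (add_nonneg ha hb)

/-- Lemma 1: floating-point arithmetic evaluation of a decision-DNNF formula with
nonnegative literal weights, where each rounding introduces relative error at most
`ε`, yields a result with relative error at most `(4n - 2)·ε` for a formula over
`n ≤ 1/(2√ε)` variables.  Here `w` are the exact weights, `wh` their rounded
floating-point representations, and `Wh` the floating-point evaluation of each
subformula (each operation computes the exact result on its approximate arguments
and then rounds with relative error at most `ε`). -/
theorem decisionDNNF_error_bound
    (w wh : ℕ → Bool → ℝ) (Wh : DFormula → ℝ) (ε : ℝ) (hε : 0 < ε)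
    (hwpos : ∀ x b, 0 ≤ w x b)
    (hlit : ∀ x b, relErr (wh x b) (w x b) ≤ ε)
    (hWlit : ∀ x b, Wh (.lit x b) = wh x b)
    (hconj : ∀ f g, |Wh (.conj f g) - Wh f * Wh g| ≤ ε * |Wh f * Wh g|)
    (hdec : ∀ x f g, ∃ v₁ v₂ : ℝ,
      |v₁ - wh x true * Wh f| ≤ ε * |wh x true * Wh f| ∧
      |v₂ - wh x false * Wh g| ≤ ε * |wh x false * Wh g| ∧
      |Wh (.dec x f g) - (v₁ + v₂)| ≤ ε * |v₁ + v₂|)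
    (φ : DFormula) (hdecomp : DFormula.Decomposable φ)
    (hn : ((φ.vars.card : ℝ)) ≤ 1 / (2 * Real.sqrt ε)) :
    relErr (Wh φ) (φ.eval w) ≤ (4 * (φ.vars.card : ℝ) - 2) * ε := by
  have hn1 : (1:ℝ) ≤ (φ.vars.card : ℝ) := by exact_mod_cast φ.one_le_card_vars
  have hsq : Real.sqrt ε ^ 2 = ε := Real.sq_sqrt hε.le
  have h1 : (φ.vars.card : ℝ) * (2 * Real.sqrt ε) ≤ 1 :=
    (le_div_iff₀ (by positivity)).mp hn
  have key : 4 * ((φ.vars.card : ℝ))^2 * ε ≤ 1 := by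
    nlinarith [mul_nonneg (mul_nonneg (by norm_num : (0:ℝ) ≤ 2) (Nat.cast_nonneg φ.vars.card))
      (Real.sqrt_nonneg ε), Real.sqrt_nonneg ε]
  have hεlt : ε < 1 := by nlinarith
  have hlit' : ∀ x b, |wh x b - w x b| ≤ ε * w x b := fun x b =>
    relErr_to _ _ _ (hwpos x b) hεlt (hlit x b)
  have haux := aux_bound w wh Wh ε hε hwpos hlit' hWlit hconj hdec φ hdecomp key
  exact relErr_of _ _ _ (DFormula.eval_nonneg w hwpos φ) (by nlinarith) haux
end

section
/- The floating-point computation of a product P = ∏_{i=1}^{n} s(i) of n nonnegative factors, where each factor is represented with relative error at most ε and each multiplication propagates the sum of argument errors plus 2 units of rounding error, yields an approximation P̂ with δ[P̂, P] ≤ (3n - 2)·ε, provided n ≤ 1/(2√ε). -/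
/-- A product tree: an arbitrary association of binary multiplications over
indexed factors. -/
inductive PTree : Type where
  | leaf : ℕ → PTree
  | mul : PTree → PTree → PTree

namespace PTree

/-- Number of factors. -/
def size : PTree → ℕ
  | leaf _ => 1
  | mul a b => size a + size b

/-- Exact value of the product given the factors `s`. -/
def eval (s : ℕ → ℝ) : PTree → ℝ
  | leaf i => s i
  | mul a b => eval s a * eval s b

end PTree

lemma PTree.one_le_size (t : PTree) : 1 ≤ t.size := by
  induction t with
  | leaf i => simp [PTree.size]
  | mul a b iha ihb => simp only [PTree.size]; omega

lemma PTree.eval_nonneg (s : ℕ → ℝ) (hs : ∀ i, 0 ≤ s i) (t : PTree) :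
    0 ≤ t.eval s := by
  induction t with
  | leaf i => exact hs i
  | mul a b iha ihb => exact mul_nonneg iha ihb

lemma key_ineq (k m ε : ℝ) (hk : 1 ≤ k) (hm : 1 ≤ m) (hε : 0 < ε)
    (h4 : 4 * (k+m)^2 * ε ≤ 1) :
    ((3*k-2)*(3*m-2) + (3*k-2) + (3*m-2)) * ε + (3*k-2)*(3*m-2) * ε^2 ≤ 1 := by
  nlinarith [sq_nonneg (k-m), mul_pos hε hε, sq_nonneg (k+m),
    mul_nonneg (mul_nonneg hε.le hε.le) (sq_nonneg (k-m)),
    mul_nonneg hε.le (sq_nonneg (k-m)),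
    mul_le_of_le_one_right hε.le (by nlinarith : ε ≤ 1)]

lemma relErr_eq_zero_of_lt_one {xh c : ℝ} (h : relErr xh 0 ≤ c) (hc : c < 1) :
    xh = 0 := by
  by_contra hxh
  simp [relErr, hxh] at h
  linarith

/-- Lemma 2: a floating-point computation of a product of `n` nonnegative factors,
with each factor represented with relative error at most `ε` and each
multiplication rounded with relative error at most `ε`, has relative error at most
`(3n - 2)·ε`, provided `n ≤ 1/(2√ε)`. -/
theorem product_error_bound
    (s : ℕ → ℝ) (Ph : PTree → ℝ) (ε : ℝ) (hε : 0 < ε)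
    (hspos : ∀ i, 0 ≤ s i)
    (hleaf : ∀ i, relErr (Ph (.leaf i)) (s i) ≤ ε)
    (hmul : ∀ a b, |Ph (.mul a b) - Ph a * Ph b| ≤ ε * |Ph a * Ph b|)
    (t : PTree) (hn : ((t.size : ℝ)) ≤ 1 / (2 * Real.sqrt ε)) :
    relErr (Ph t) (t.eval s) ≤ (3 * (t.size : ℝ) - 2) * ε := by
  have hsq : 0 < Real.sqrt ε := Real.sqrt_pos.mpr hε
  have hpoly : ∀ t' : PTree, ((t'.size : ℝ)) ≤ 1 / (2 * Real.sqrt ε) →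
      4 * ((t'.size : ℝ))^2 * ε ≤ 1 := by
    intro t' h
    have h1 : 2 * Real.sqrt ε * (t'.size : ℝ) ≤ 1 := by
      rw [le_div_iff₀ (by positivity)] at h
      linarith
    have h2 : (2 * Real.sqrt ε * (t'.size : ℝ))^2 ≤ 1 := by
      nlinarith [mul_nonneg (by positivity : (0:ℝ) ≤ 2 * Real.sqrt ε)
        (Nat.cast_nonneg t'.size : (0:ℝ) ≤ (t'.size:ℝ))]
    calc 4 * ((t'.size : ℝ))^2 * ε = (2 * Real.sqrt ε * (t'.size : ℝ))^2 := by
          rw [mul_pow, mul_pow, Real.sq_sqrt hε.le]; ring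
      _ ≤ 1 := h2
  have hlt1 : ∀ t' : PTree, ((t'.size : ℝ)) ≤ 1 / (2 * Real.sqrt ε) →
      (3 * ((t'.size : ℝ)) - 2) * ε < 1 := by
    intro t' h
    have h4 := hpoly t' h
    have h1 : (1:ℝ) ≤ (t'.size : ℝ) := by exact_mod_cast t'.one_le_size
    nlinarith [mul_pos hε (by linarith : (0:ℝ) < (t'.size : ℝ))]
  revert hn
  induction t with
  | leaf i =>
    intro hn
    have := hleaf i
    simp only [PTree.size, PTree.eval, Nat.cast_one]
    linarith
  | mul a b iha ihb =>
    intro hn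
    have hab : (((PTree.mul a b).size : ℝ)) = (a.size : ℝ) + (b.size : ℝ) := by
      simp [PTree.size]
    have hka : (1:ℝ) ≤ (a.size : ℝ) := by exact_mod_cast a.one_le_size
    have hkb : (1:ℝ) ≤ (b.size : ℝ) := by exact_mod_cast b.one_le_size
    have hna : ((a.size : ℝ)) ≤ 1 / (2 * Real.sqrt ε) := by rw [hab] at hn; linarith
    have hnb : ((b.size : ℝ)) ≤ 1 / (2 * Real.sqrt ε) := by rw [hab] at hn; linarith
    have Ha := iha hna
    have Hb := ihb hnb
    set k : ℝ := (a.size : ℝ) with hk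
    set m : ℝ := (b.size : ℝ) with hm
    set x := a.eval s with hx
    set y := b.eval s with hy
    have hxnn : 0 ≤ x := PTree.eval_nonneg s hspos a
    have hynn : 0 ≤ y := PTree.eval_nonneg s hspos b
    have hRHSpos : 0 < (3 * ((PTree.mul a b).size : ℝ) - 2) * ε := by
      rw [hab]
      nlinarith [mul_pos hε (show (0:ℝ) < k + m by linarith)]
    by_cases hx0 : x = 0
    · have hPa : Ph a = 0 := relErr_eq_zero_of_lt_one (hx0 ▸ Ha) (hlt1 a hna)
      have hPm : Ph (PTree.mul a b) = 0 := by
        have h := hmul a b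
        rw [hPa, zero_mul] at h
        have h' : |Ph (PTree.mul a b)| ≤ 0 := by simpa using h
        simpa using abs_nonpos_iff.mp h'
      have hev : (PTree.mul a b).eval s = 0 := by
        show x * y = 0
        rw [hx0, zero_mul]
      rw [hev, hPm]
      simpa [relErr] using hRHSpos.le
    by_cases hy0 : y = 0
    · have hPb : Ph b = 0 := relErr_eq_zero_of_lt_one (hy0 ▸ Hb) (hlt1 b hnb)
      have hPm : Ph (PTree.mul a b) = 0 := by
        have h := hmul a b
        rw [hPb, mul_zero] at h
        have h' : |Ph (PTree.mul a b)| ≤ 0 := by simpa using h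
        simpa using abs_nonpos_iff.mp h'
      have hev : (PTree.mul a b).eval s = 0 := by
        show x * y = 0
        rw [hy0, mul_zero]
      rw [hev, hPm]
      simpa [relErr] using hRHSpos.le
    -- both factors positive
    have hxpos : 0 < x := lt_of_le_of_ne hxnn (Ne.symm hx0)
    have hypos : 0 < y := lt_of_le_of_ne hynn (Ne.symm hy0)
    have h4 := hpoly (PTree.mul a b) hn
    rw [hab] at h4
    have hkey := key_ineq k m ε hka hkb hε h4
    have hε1 : ε ≤ 1 := by nlinarith
    rw [relErr, if_neg hx0, abs_of_pos hxpos, div_le_iff₀ hxpos] at Ha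
    rw [relErr, if_neg hy0, abs_of_pos hypos, div_le_iff₀ hypos] at Hb
    have hA := abs_le.mp Ha
    have hB := abs_le.mp Hb
    have hAε : (3*k - 2) * ε < 1 := hlt1 a hna
    have hBε : (3*m - 2) * ε < 1 := hlt1 b hnb
    have hPapos : 0 < Ph a := by
      have := mul_lt_mul_of_pos_right hAε hxpos
      linarith [hA.1]
    have hPbpos : 0 < Ph b := by
      have := mul_lt_mul_of_pos_right hBε hypos
      linarith [hB.1]
    have hPab : |Ph a * Ph b| = Ph a * Ph b := abs_of_pos (mul_pos hPapos hPbpos)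
    have hM := hmul a b
    rw [hPab] at hM
    have hMle := abs_le.mp hM
    -- product bounds
    have hPaU : Ph a ≤ x + (3*k-2)*ε*x := by linarith [hA.2]
    have hPaL : x - (3*k-2)*ε*x ≤ Ph a := by linarith [hA.1]
    have hPbU : Ph b ≤ y + (3*m-2)*ε*y := by linarith [hB.2]
    have hPbL : y - (3*m-2)*ε*y ≤ Ph b := by linarith [hB.1]
    have hPabU : Ph a * Ph b ≤ (x + (3*k-2)*ε*x) * (y + (3*m-2)*ε*y) :=
      mul_le_mul hPaU hPbU hPbpos.le (by linarith [mul_nonneg (mul_nonneg (by linarith : (0:ℝ) ≤ 3*k-2) hε.le) hxpos.le])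
    have hPabL : (x - (3*k-2)*ε*x) * (y - (3*m-2)*ε*y) ≤ Ph a * Ph b :=
      mul_le_mul hPaL hPbL (by linarith [mul_lt_mul_of_pos_right hBε hypos]) hPapos.le
    have hxy : (0:ℝ) < x * y := mul_pos hxpos hypos
    have hxyne : x * y ≠ 0 := ne_of_gt hxy
    have hev : (PTree.mul a b).eval s = x * y := rfl
    rw [hev, relErr, if_neg hxyne, abs_of_pos hxy, div_le_iff₀ hxy, hab, abs_le]
    have hkey' : (((3*k-2)*(3*m-2) + (3*k-2) + (3*m-2)) * ε
        + (3*k-2)*(3*m-2) * ε^2) * (ε * (x*y)) ≤ 1 * (ε * (x*y)) :=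
      mul_le_mul_of_nonneg_right hkey (by positivity)
    have hABnn : 0 ≤ (3*k-2)*(3*m-2)*ε^2*(x*y) := by
      have h1 : (0:ℝ) ≤ 3*k-2 := by linarith
      have h2 : (0:ℝ) ≤ 3*m-2 := by linarith
      positivity
    have hεU := mul_le_mul_of_nonneg_left hPabU hε.le
    constructor
    · linarith [hMle.1, hPabL, hεU, hkey', hABnn]
    · linarith [hMle.2, hPabU, hεU, hkey', hABnn]
end

section
/- Let W be rescaled weights satisfying W(x) + W(x̄) = 1 for every variable x. For a smooth deterministic decomposable formula φ, arithmetic evaluation (literals evaluate to their weights, decomposable conjunctions to products, deterministic disjunctions to sums) yields the weighted model count: W evaluated arithmetically on φ equals Σ_{α ∈ M(φ)} Π_{ℓ ∈ α} W(ℓ). -/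
/-- Negation normal form formulas over variables `V`: literals, conjunctions,
and disjunctions. -/
inductive NNF (V : Type) : Type where
  | lit : V → Bool → NNF V
  | and : NNF V → NNF V → NNF V
  | or : NNF V → NNF V → NNF V

namespace NNF

variable {V : Type}

/-- The variables occurring in a formula. -/
def vars [DecidableEq V] : NNF V → Finset V
  | lit x _ => {x}
  | and f g => vars f ∪ vars g
  | or f g => vars f ∪ vars g

/-- Satisfaction of a formula by a total assignment. -/
def sat (α : V → Bool) : NNF V → Bool
  | lit x b => α x == b
  | and f g => sat α f && sat α g
  | or f g => sat α f || sat α g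

/-- Decomposability: every conjunction has disjoint variable sets. -/
def Decomposable [DecidableEq V] : NNF V → Prop
  | lit _ _ => True
  | and f g => Disjoint (vars f) (vars g) ∧ Decomposable f ∧ Decomposable g
  | or f g => Decomposable f ∧ Decomposable g

/-- Determinism: every disjunction has disjoint model sets. -/
def Deterministic : NNF V → Prop
  | lit _ _ => True
  | and f g => Deterministic f ∧ Deterministic g
  | or f g => (∀ α : V → Bool, ¬(sat α f ∧ sat α g)) ∧
      Deterministic f ∧ Deterministic g

/-- Smoothness: every disjunction has equal variable sets. -/
def Smooth [DecidableEq V] : NNF V → Prop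
  | lit _ _ => True
  | and f g => Smooth f ∧ Smooth g
  | or f g => vars f = vars g ∧ Smooth f ∧ Smooth g

/-- Arithmetic evaluation: literals evaluate to their weights, conjunctions to
products, disjunctions to sums. -/
def eval (W : V → Bool → ℝ) : NNF V → ℝ
  | lit x b => W x b
  | and f g => eval W f * eval W g
  | or f g => eval W f + eval W g

end NNF

namespace NNFAux

open NNF

variable {V : Type} [Fintype V] [DecidableEq V]

set_option linter.unusedSectionVars false

lemma sat_congr (φ : NNF V) {α β : V → Bool}
    (h : ∀ x ∈ φ.vars, α x = β x) : sat α φ = sat β φ := by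
  induction φ with
  | lit x b => simp [sat, h x (by simp [vars])]
  | and f g ihf ihg =>
      simp only [vars, Finset.mem_union] at h
      simp only [sat]
      rw [ihf (fun x hx => h x (Or.inl hx)), ihg (fun x hx => h x (Or.inr hx))]
  | or f g ihf ihg =>
      simp only [vars, Finset.mem_union] at h
      simp only [sat]
      rw [ihf (fun x hx => h x (Or.inl hx)), ihg (fun x hx => h x (Or.inr hx))]

def rep (s : Finset V) (α : V → Bool) : V → Bool := fun x => if x ∈ s then α x else false

lemma rep_agree (s : Finset V) (α : V → Bool) : ∀ x ∈ s, rep s α x = α x := by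
  intro x hx; simp [rep, hx]

def D (s : Finset V) : Finset (V → Bool) :=
  Fintype.piFinset (fun x => if x ∈ s then (Finset.univ : Finset Bool) else {false})

lemma mem_D {s : Finset V} {α : V → Bool} : α ∈ D s ↔ ∀ x ∉ s, α x = false := by
  simp only [D, Fintype.mem_piFinset]
  constructor
  · intro h x hx
    have := h x
    simpa [hx] using this
  · intro h x
    by_cases hx : x ∈ s <;> simp [hx, h]

lemma rep_mem_D (s : Finset V) (α : V → Bool) : rep s α ∈ D s := by
  rw [mem_D]; intro x hx; simp [rep, hx]

lemma sum_piFinset (W : V → Bool → ℝ) (t : V → Finset Bool) :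
    ∑ α ∈ Fintype.piFinset t, ∏ x, W x (α x) = ∏ x, ∑ b ∈ t x, W x b :=
  (Finset.prod_univ_sum t W).symm

lemma fiber_eq {s : Finset V} {ρ : V → Bool} (hρ : ρ ∈ D s) :
    (Finset.univ.filter (fun α : V → Bool => rep s α = ρ)) =
      Fintype.piFinset (fun x => if x ∈ s then ({ρ x} : Finset Bool) else Finset.univ) := by
  rw [mem_D] at hρ
  ext α
  simp only [Finset.mem_filter, Finset.mem_univ, true_and, Fintype.mem_piFinset]
  constructor
  · intro h x
    by_cases hx : x ∈ s
    · simp [hx, ← h, rep]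
    · simp [hx]
  · intro h
    funext x
    by_cases hx : x ∈ s
    · have := h x; simp [hx] at this; simp [rep, hx, this]
    · simp [rep, hx, hρ x hx]

lemma sum_fiber (W : V → Bool → ℝ) (hW : ∀ x, W x true + W x false = 1)
    {s : Finset V} {ρ : V → Bool} (hρ : ρ ∈ D s) :
    ∑ α ∈ Finset.univ.filter (fun α : V → Bool => rep s α = ρ),
      ∏ x, W x (α x) = ∏ x ∈ s, W x (ρ x) := by
  rw [fiber_eq hρ, sum_piFinset]
  have key : ∀ x : V, (∑ b ∈ (if x ∈ s then ({ρ x} : Finset Bool) else Finset.univ), W x b)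
      = if x ∈ s then W x (ρ x) else 1 := by
    intro x
    by_cases hx : x ∈ s
    · simp [hx]
    · simp [hx, Fintype.sum_bool, hW x]
  rw [Finset.prod_congr rfl (fun x _ => key x), Finset.prod_ite_mem, Finset.univ_inter]

/-- Regrouping the full weighted sum by canonical representatives. -/
lemma regroup (W : V → Bool → ℝ) (hW : ∀ x, W x true + W x false = 1) (φ : NNF V) :
    ∑ α ∈ Finset.univ.filter (fun α : V → Bool => sat α φ), ∏ x, W x (α x)
      = ∑ ρ ∈ (D φ.vars).filter (fun ρ => sat ρ φ), ∏ x ∈ φ.vars, W x (ρ x) := by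
  rw [← Finset.sum_fiberwise_of_maps_to (g := rep φ.vars)
      (t := (D φ.vars).filter (fun ρ => sat ρ φ))
      (fun α hα => by
        simp only [Finset.mem_filter, Finset.mem_univ, true_and] at hα ⊢
        refine ⟨rep_mem_D _ _, ?_⟩
        rw [sat_congr φ (rep_agree φ.vars α)]
        exact hα)]
  refine Finset.sum_congr rfl (fun ρ hρ => ?_)
  simp only [Finset.mem_filter] at hρ
  rw [← sum_fiber W hW hρ.1]
  congr 1
  ext α
  simp only [Finset.mem_filter, Finset.mem_univ, true_and]
  constructor
  · exact fun h => h.2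
  · intro h
    refine ⟨?_, h⟩
    rw [← sat_congr φ (rep_agree φ.vars α), h]
    exact hρ.2

/-- Main induction: the evaluation equals the restricted weighted model count. -/
lemma eval_eq_restricted (W : V → Bool → ℝ)
    (φ : NNF V) (hd : φ.Decomposable) (hdet : φ.Deterministic) (hsm : φ.Smooth) :
    φ.eval W = ∑ ρ ∈ (D φ.vars).filter (fun ρ => sat ρ φ), ∏ x ∈ φ.vars, W x (ρ x) := by
  induction φ with
  | lit x b =>
      have hset : (D (vars (lit x b))).filter (fun ρ => sat ρ (lit x b))
          = {fun y => if y = x then b else false} := by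
        ext α
        simp only [Finset.mem_filter, mem_D, Finset.mem_singleton, vars, sat,
          Finset.mem_singleton, beq_iff_eq]
        constructor
        · rintro ⟨h1, h2⟩
          funext y
          by_cases hy : y = x
          · simp [hy, h2]
          · simp [hy, h1 y (by simp [hy])]
        · intro h
          subst h
          constructor
          · intro y hy
            have : y ≠ x := by simpa using hy
            simp [this]
          · simp
      rw [hset]
      simp [eval, vars]
  | and f g ihf ihg =>
      obtain ⟨hdisj, hdf, hdg⟩ := hd
      obtain ⟨hdetf, hdetg⟩ := hdet
      obtain ⟨hsf, hsg⟩ := hsm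
      have hf := ihf hdf hdetf hsf
      have hg := ihg hdg hdetg hsg
      show eval W f * eval W g = _
      rw [hf, hg, Finset.sum_mul_sum, ← Finset.sum_product']
      refine Finset.sum_nbij'
        (i := fun p : (V → Bool) × (V → Bool) => fun x => if x ∈ vars f then p.1 x else p.2 x)
        (j := fun γ => (rep (vars f) γ, rep (vars g) γ)) ?_ ?_ ?_ ?_ ?_
      · rintro ⟨α, β⟩ hp
        simp only [Finset.mem_product, Finset.mem_filter] at hp
        obtain ⟨⟨hαD, hαs⟩, hβD, hβs⟩ := hp
        simp only [Finset.mem_filter, mem_D, vars, sat, Finset.mem_union, Bool.and_eq_true]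
        refine ⟨fun x hx => ?_, ?_, ?_⟩
        · push_neg at hx
          simp [hx.1, mem_D.1 hβD x hx.2]
        · rw [sat_congr f (β := α) (fun x hx => by simp [hx])]; exact hαs
        · rw [sat_congr g (β := β) (fun x hx => by
            simp [Finset.disjoint_right.1 hdisj hx])]; exact hβs
      · intro γ hγ
        simp only [Finset.mem_filter, vars, sat, Bool.and_eq_true] at hγ
        obtain ⟨hγD, hγf, hγg⟩ := hγ
        simp only [Finset.mem_product, Finset.mem_filter]
        exact ⟨⟨rep_mem_D _ _, by rwa [sat_congr f (rep_agree (vars f) γ)]⟩,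
               rep_mem_D _ _, by rwa [sat_congr g (rep_agree (vars g) γ)]⟩
      · rintro ⟨α, β⟩ hp
        simp only [Finset.mem_product, Finset.mem_filter] at hp
        obtain ⟨⟨hαD, _⟩, hβD, _⟩ := hp
        refine Prod.ext ?_ ?_ <;> funext x <;> simp only [rep]
        · by_cases hx : x ∈ vars f
          · simp [hx]
          · simp [hx, mem_D.1 hαD x hx]
        · by_cases hx : x ∈ vars g
          · simp [hx, Finset.disjoint_right.1 hdisj hx]
          · simp [hx, mem_D.1 hβD x hx]
      · intro γ hγ
        simp only [Finset.mem_filter, vars] at hγ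
        funext x
        by_cases hx : x ∈ vars f
        · simp [rep, hx]
        · by_cases hx2 : x ∈ vars g
          · simp [rep, hx, hx2]
          · have : γ x = false := mem_D.1 hγ.1 x (by simp [hx, hx2])
            simp [rep, hx, hx2, this]
      · rintro ⟨α, β⟩ hp
        simp only [Finset.mem_product, Finset.mem_filter] at hp
        show _ = ∏ x ∈ vars (and f g), _
        rw [show vars (and f g) = vars f ∪ vars g from rfl, Finset.prod_union hdisj]
        congr 1
        · exact Finset.prod_congr rfl (fun x hx => by simp [hx])
        · exact Finset.prod_congr rfl (fun x hx => by
            simp [Finset.disjoint_right.1 hdisj hx])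
  | or f g ihf ihg =>
      obtain ⟨hdf, hdg⟩ := hd
      obtain ⟨hdisj, hdetf, hdetg⟩ := hdet
      obtain ⟨hveq, hsf, hsg⟩ := hsm
      have hf := ihf hdf hdetf hsf
      have hg := ihg hdg hdetg hsg
      have hv : vars (or f g) = vars f := by
        show vars f ∪ vars g = vars f
        rw [← hveq, Finset.union_self]
      have hsplit : (D (vars (or f g))).filter (fun ρ => sat ρ (or f g))
          = (D (vars f)).filter (fun ρ => sat ρ f)
            ∪ (D (vars g)).filter (fun ρ => sat ρ g) := by
        ext ρ
        simp only [Finset.mem_filter, Finset.mem_union, hv, ← hveq, sat, Bool.or_eq_true]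
        tauto
      have hdisj2 : Disjoint ((D (vars f)).filter (fun ρ => sat ρ f))
          ((D (vars g)).filter (fun ρ => sat ρ g)) := by
        rw [Finset.disjoint_left]
        intro ρ h1 h2
        simp only [Finset.mem_filter] at h1 h2
        exact hdisj ρ ⟨h1.2, h2.2⟩
      show eval W f + eval W g = _
      rw [hsplit, Finset.sum_union hdisj2, hf, hg]
      congr 1
      · exact Finset.sum_congr rfl (fun ρ _ => by rw [hv])
      · exact Finset.sum_congr rfl (fun ρ _ => by rw [hv, ← hveq])

end NNFAux


/-- For weights normalized by `W(x) + W(x̄) = 1` and a smooth, deterministic,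
decomposable formula `φ`, arithmetic evaluation yields the weighted model count
`Σ_{α ∈ M(φ)} Π_{ℓ ∈ α} W(ℓ)`. -/
theorem ddnnf_eval_eq_wmc (V : Type) [Fintype V] [DecidableEq V]
    (W : V → Bool → ℝ) (hW : ∀ x, W x true + W x false = 1)
    (φ : NNF V) (hd : φ.Decomposable) (hdet : φ.Deterministic) (hsm : φ.Smooth) :
    φ.eval W = ∑ α ∈ Finset.univ.filter (fun α : V → Bool => φ.sat α),
      ∏ x, W x (α x) := by
  rw [NNFAux.regroup W hW φ]
  exact NNFAux.eval_eq_restricted W φ hd hdet hsm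
end

section
/- In ERD addition, a much smaller addend can be dropped within one unit of double rounding error: if normalized ERD values ⟨d₁, e₁⟩ and ⟨d₂, e₂⟩ (with d₁, d₂ ≠ 0, 1 ≤ |d₁|, |d₂| < 2) satisfy e₁ > 54 + e₂, then |(d₁·2^{e₁} + d₂·2^{e₂}) - d₁·2^{e₁}| ≤ 2^{-53}·|d₁·2^{e₁}|, i.e., returning ⟨d₁, e₁⟩ as the sum has relative error at most 2^{-53}. -/
/-- The ERD addition shortcut: if normalized ERD values `⟨d₁, e₁⟩`, `⟨d₂, e₂⟩`
(with `1 ≤ |d₁|, |d₂| < 2`) satisfy `e₁ > 54 + e₂`, then dropping the smaller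
addend and returning `⟨d₁, e₁⟩` has relative error at most `2^{-53}`. -/
theorem erd_add_drop_small (d₁ d₂ : ℝ) (e₁ e₂ : ℤ)
    (h₁lo : 1 ≤ |d₁|) (h₁hi : |d₁| < 2)
    (h₂lo : 1 ≤ |d₂|) (h₂hi : |d₂| < 2)
    (he : e₁ > 54 + e₂) :
    |(d₁ * (2:ℝ) ^ e₁ + d₂ * (2:ℝ) ^ e₂) - d₁ * (2:ℝ) ^ e₁| ≤
      (2:ℝ) ^ (-53:ℤ) * |d₁ * (2:ℝ) ^ e₁| := by
  have h2 : (1:ℝ) < 2 := one_lt_two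
  have hp : ∀ n : ℤ, (0:ℝ) < (2:ℝ) ^ n := fun n => zpow_pos (by norm_num) n
  simp only [add_sub_cancel_left, abs_mul]
  rw [abs_of_pos (hp e₁), abs_of_pos (hp e₂)]
  have key : (2:ℝ) ^ (-53 + e₁) = (2:ℝ) ^ (-53:ℤ) * (2:ℝ) ^ e₁ :=
    zpow_add₀ (by norm_num : (2:ℝ) ≠ 0) _ _
  have h1 : |d₂| * (2:ℝ) ^ e₂ ≤ 2 * (2:ℝ) ^ e₂ := by
    have := (hp e₂).le
    nlinarith [h₂hi.le]
  have h2' : (2:ℝ) * (2:ℝ) ^ e₂ ≤ (2:ℝ) ^ (-53 + e₁) := by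
    have : (2:ℝ) * (2:ℝ) ^ e₂ = (2:ℝ) ^ (e₂ + 1) := by
      rw [zpow_add₀ (by norm_num : (2:ℝ) ≠ 0)]; ring
    rw [this]
    exact zpow_le_zpow_right₀ (by norm_num) (by omega)
  nlinarith [hp (-53 + e₁), mul_le_mul_of_nonneg_left h₁lo (hp (-53 + e₁)).le]
end

section
/- If the fraction size p satisfies p ≥ D·log₂ 10 + log₂ n + log₂ 7 and the relative evaluation error is at most (7n-4)·2^{-p} with 7n·2^{-p} < 1, then the decimal precision of the computed weighted count is at least D. -/
/-- Decimal precision of an approximation. -/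
noncomputable def decPrec (xh x : ℝ) : ℝ :=
  max 0 (-Real.logb 10 (relErr xh x))

/-- Choosing fraction size `p ≥ D·log₂ 10 + log₂ n + log₂ 7` guarantees target
decimal precision `D`, given a relative evaluation error of at most
`(7n - 4)·2^{-p}` with `7n·2^{-p} < 1`. -/
theorem target_precision_achieved (v vh : ℝ) (p n : ℕ) (D : ℝ)
    (hn : 1 ≤ n)
    (hp : (p:ℝ) ≥ D * Real.logb 2 10 + Real.logb 2 n + Real.logb 2 7)
    (hδpos : 0 < relErr vh v)
    (hδ : relErr vh v ≤ (7 * (n:ℝ) - 4) * (2:ℝ) ^ (-(p:ℤ)))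
    (h7 : 7 * (n:ℝ) * (2:ℝ) ^ (-(p:ℤ)) < 1) :
    decPrec vh v ≥ D := by
  set δ := relErr vh v with hδdef
  have hnpos : (0:ℝ) < (n:ℝ) := by exact_mod_cast hn
  have h2pos : (0:ℝ) < (2:ℝ) ^ (-(p:ℤ)) := by positivity
  have hzr : ((2:ℝ) ^ (-(p:ℤ))) = (2:ℝ) ^ (-(p:ℝ)) := by
    rw [← Real.rpow_intCast]; norm_num
  -- δ ≤ 7n·2^{-p}
  have hδ2 : δ ≤ 7 * (n:ℝ) * (2:ℝ) ^ (-(p:ℤ)) := by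
    refine hδ.trans ?_
    have : (7 * (n:ℝ) - 4) ≤ 7 * (n:ℝ) := by linarith
    nlinarith [h2pos]
  -- 7n·2^{-p} ≤ 10^{-D}
  have hkey : 7 * (n:ℝ) * (2:ℝ) ^ (-(p:ℤ)) ≤ (10:ℝ) ^ (-D) := by
    have hpos : (0:ℝ) < 7 * (n:ℝ) * (2:ℝ) ^ (-(p:ℤ)) := by positivity
    have hlog : Real.logb 2 (7 * (n:ℝ) * (2:ℝ) ^ (-(p:ℤ))) ≤ -D * Real.logb 2 10 := by
      rw [hzr, Real.logb_mul (by positivity) (by positivity),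
        Real.logb_mul (by norm_num) (by positivity),
        Real.logb_rpow (by norm_num) (by norm_num)]
      linarith
    have := (Real.logb_le_iff_le_rpow (by norm_num : (1:ℝ) < 2) hpos).mp hlog
    calc 7 * (n:ℝ) * (2:ℝ) ^ (-(p:ℤ)) ≤ (2:ℝ) ^ (-D * Real.logb 2 10) := this
      _ = (10:ℝ) ^ (-D) := by
          rw [mul_comm, Real.rpow_mul (by norm_num), Real.rpow_logb (by norm_num) (by norm_num) (by norm_num)]
  have hδ3 : δ ≤ (10:ℝ) ^ (-D) := hδ2.trans hkey
  have hlogδ : Real.logb 10 δ ≤ -D :=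
    (Real.logb_le_iff_le_rpow (by norm_num : (1:ℝ) < 10) hδpos).mpr hδ3
  have : D ≤ -Real.logb 10 δ := by linarith
  calc D ≤ -Real.logb 10 δ := this
    _ ≤ max 0 (-Real.logb 10 δ) := le_max_right _ _
    _ = decPrec vh v := rfl
end
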